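/- In addition to the hypotheses on S, let B be a nondegenerate symmetric bilinear form on ℂⁿ satisfying B(S(z)v, w) = B(v, S(z)w) for all v, w ∈ ℂⁿ and all z in a neighborhood of 0. Then for every k ∈ ℕ and every v ∈ V_k^S the following are equivalent: (a) v ∈ V_{k+1}^S; (b) for every w ∈ V_k^S and all functions f, g : ℂ → ℂⁿ analytic near 0 with f(0) = v and g(0) = w, such that both z ↦ S(z)f(z) and z ↦ S(z)g(z) vanish to order ≥ k at 0, one has lim_{z→0} z^{−k}·B(S(z)f(z), g(z)) = 0. (In other words, the induced bilinear form ⟨v,w⟩_k on V_k^S is well defined and its radical equals exactly V_{k+1}^S, so it is nondegenerate on V_k^S/V_{k+1}^S.) -/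

import Mathlib

open Filter Topology Matrix

/-- `V_k^S`: the set of vectors `f 0`, where `f` is analytic near `0` and `S z *ᵥ f z`
vanishes to order at least `k` at `0`. -/
def VkSet {n : ℕ} (S : ℂ → Matrix (Fin n) (Fin n) ℂ) (k : ℕ) : Set (Fin n → ℂ) :=
  {v | ∃ f g : ℂ → Fin n → ℂ,
    (∀ i, AnalyticAt ℂ (fun z => f z i) 0) ∧
    (∀ i, AnalyticAt ℂ (fun z => g z i) 0) ∧
    f 0 = v ∧
    ∀ᶠ z in 𝓝 (0 : ℂ), S z *ᵥ f z = z ^ k • g z}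

lemma analyticAt_dslope {F : ℂ → ℂ} (hF : AnalyticAt ℂ F 0) : AnalyticAt ℂ (dslope F 0) 0 := by
  obtain ⟨p, hp⟩ := hF
  exact ⟨p.fslope, hp.has_fpower_series_dslope_fslope⟩

lemma exists_div {F : ℂ → ℂ} (hF : AnalyticAt ℂ F 0) (h0 : F 0 = 0) :
    ∃ G : ℂ → ℂ, AnalyticAt ℂ G 0 ∧ ∀ z, F z = z * G z := by
  refine ⟨dslope F 0, analyticAt_dslope hF,fun z => ?_⟩
  have := sub_smul_dslope F 0 z
  simp only [sub_zero, h0, smul_eq_mul] at this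
  exact this.symm

-- eventual equality upgrade from punctured nbhd
lemma eventuallyEq_nhds_of_punctured {α : Type*} {f g : ℂ → α}
    (h : ∀ᶠ z in 𝓝[≠] (0:ℂ), f z = g z) (h0 : f 0 = g 0) :
    ∀ᶠ z in 𝓝 (0:ℂ), f z = g z := by
  rw [← nhdsNE_sup_pure (0:ℂ), eventually_sup]
  exact ⟨h, by simpa using h0⟩

-- cancel z
lemma cancel_z {A C : ℂ → ℂ} (h : ∀ᶠ z in 𝓝 (0:ℂ), z * A z = z * C z)
    (hA : ContinuousAt A 0) (hC : ContinuousAt C 0) :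
    ∀ᶠ z in 𝓝 (0:ℂ), A z = C z := by
  have hp : ∀ᶠ z in 𝓝[≠] (0:ℂ), A z = C z := by
    filter_upwards [h.filter_mono nhdsWithin_le_nhds, self_mem_nhdsWithin] with z hz hz0
    exact mul_left_cancel₀ hz0 hz
  refine eventuallyEq_nhds_of_punctured hp ?_
  have : NeBot (𝓝[≠] (0:ℂ)) := Module.punctured_nhds_neBot ℂ ℂ 0
  have : NeBot (𝓝[≠] (0:ℂ)) := this
  exact tendsto_nhds_unique
    (Tendsto.congr' hp (hA.continuousWithinAt.tendsto))
    (hC.continuousWithinAt.tendsto)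

lemma analyticAt_polysum {m : ℕ} (c : Fin m → ℂ) :
    AnalyticAt ℂ (fun z : ℂ => ∑ j : Fin m, c j * z ^ (j:ℕ)) 0 := by
  apply Finset.analyticAt_fun_sum
  intro j _
  exact analyticAt_const.mul (analyticAt_id.pow _)

lemma coeff_eq_zero (k : ℕ) : ∀ (m : ℕ) (c : Fin m → ℂ) (G : ℂ → ℂ), AnalyticAt ℂ G 0 →
    (∀ᶠ z in 𝓝 (0:ℂ), (∑ j : Fin m, c j * z ^ (j:ℕ)) = z ^ k * G z) →
    ∀ j : Fin m, (j : ℕ) < k → c j = 0 := by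
  induction k with
  | zero => intro m c G hG h j hj; omega
  | succ k ih =>
    intro m c G hG h
    match m with
    | 0 => intro j; exact j.elim0
    | m + 1 =>
      have h00 : c 0 = 0 := by
        have := h.self_of_nhds
        simpa [Fin.sum_univ_succ] using this
      have h2 : ∀ᶠ z in 𝓝 (0:ℂ),
          z * (∑ j : Fin m, c j.succ * z ^ (j:ℕ)) = z * (z ^ k * G z) := by
        filter_upwards [h] with z hz
        rw [Fin.sum_univ_succ, h00] at hz
        calc z * (∑ j : Fin m, c j.succ * z ^ (j:ℕ))
            = ∑ j : Fin m, c j.succ * z ^ ((j:ℕ)+1) := by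
              rw [Finset.mul_sum]; exact Finset.sum_congr rfl fun j _ => by ring
          _ = z ^ (k+1) * G z := by
              rw [← hz]; simp [Fin.val_succ]
          _ = z * (z ^ k * G z) := by ring
      have h3 := cancel_z h2 (analyticAt_polysum _).continuousAt
        (((analyticAt_id.pow k).mul hG).continuousAt)
      have h4 := ih m (fun j => c j.succ) G hG h3
      intro j hj
      rcases Fin.eq_zero_or_eq_succ j with rfl | ⟨j', rfl⟩
      · exact h00
      · exact h4 j' (by simpa [Fin.val_succ] using Nat.succ_lt_succ_iff.mp (by simpa [Fin.val_succ] using hj))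

noncomputable def rho {n k : ℕ} (a : Fin k → Fin n → ℂ) (z : ℂ) : Fin n → ℂ :=
  ∑ j : Fin k, z ^ (j:ℕ) • a j

lemma rho_apply {n k : ℕ} (a : Fin k → Fin n → ℂ) (z : ℂ) (i : Fin n) :
    rho a z i = ∑ j : Fin k, a j i * z ^ (j:ℕ) := by
  simp [rho, Finset.sum_apply, mul_comm]

lemma analyticAt_rho {n k : ℕ} (a : Fin k → Fin n → ℂ) (i : Fin n) :
    AnalyticAt ℂ (fun z => rho a z i) 0 := by
  simp only [rho_apply]
  exact analyticAt_polysum _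

lemma rho_add {n k : ℕ} (a b : Fin k → Fin n → ℂ) (z : ℂ) :
    rho (a + b) z = rho a z + rho b z := by
  simp [rho, Finset.sum_add_distrib, smul_add]

lemma rho_smul {n k : ℕ} (t : ℂ) (a : Fin k → Fin n → ℂ) (z : ℂ) :
    rho (t • a) z = t • rho a z := by
  simp [rho, Finset.smul_sum, smul_comm t]

lemma rho_zero_eval {n m : ℕ} (a : Fin (m+1) → Fin n → ℂ) :
    rho a 0 = a 0 := by
  simp [rho, Fin.sum_univ_succ, zero_pow]

lemma analyticAt_mulVec {n : ℕ} {S : ℂ → Matrix (Fin n) (Fin n) ℂ}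
    (hS : ∀ i j, AnalyticAt ℂ (fun z => S z i j) 0)
    {x : ℂ → Fin n → ℂ} (hx : ∀ i, AnalyticAt ℂ (fun z => x z i) 0) (i : Fin n) :
    AnalyticAt ℂ (fun z => (S z *ᵥ x z) i) 0 := by
  simp only [Matrix.mulVec, dotProduct]
  exact Finset.analyticAt_fun_sum _ fun j _ => (hS i j).fun_mul (hx j)

lemma exists_taylor (k : ℕ) {F : ℂ → ℂ} (hF : AnalyticAt ℂ F 0) :
    ∃ (c : Fin k → ℂ) (G : ℂ → ℂ), AnalyticAt ℂ G 0 ∧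
      ∀ z, F z = (∑ j : Fin k, c j * z ^ (j : ℕ)) + z ^ k * G z := by
  induction k generalizing F with
  | zero => exact ⟨fun j => j.elim0, F, hF, fun z => by simp⟩
  | succ k ih =>
    obtain ⟨G₀, hG₀, hdiv⟩ := exists_div (F := fun z => F z - F 0)
      (hF.sub analyticAt_const) (by simp)
    obtain ⟨c, G, hG, hGe⟩ := ih hG₀
    refine ⟨Fin.cases (F 0) c, G, hG, fun z => ?_⟩
    have h1 : F z = F 0 + z * G₀ z := by
      have := hdiv z; linear_combination this
    rw [h1, hGe z, Fin.sum_univ_succ]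
    simp only [Fin.cases_zero, Fin.cases_succ, pow_zero, mul_one, Fin.val_succ]
    rw [mul_add, Finset.mul_sum]
    rw [show (∑ j : Fin k, z * (c j * z ^ (j:ℕ))) = ∑ j : Fin k, c j * z ^ ((j:ℕ)+1) from
      Finset.sum_congr rfl fun j _ => by ring]
    simp only [Fin.val_zero, pow_zero, mul_one, pow_succ]
    ring

lemma exists_taylor_vec {n : ℕ} (k : ℕ) {F : ℂ → Fin n → ℂ}
    (hF : ∀ i, AnalyticAt ℂ (fun z => F z i) 0) :
    ∃ (a : Fin k → Fin n → ℂ) (G : ℂ → Fin n → ℂ),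
      (∀ i, AnalyticAt ℂ (fun z => G z i) 0) ∧
      ∀ z, F z = rho a z + z ^ k • G z := by
  have H : ∀ i : Fin n, ∃ (c : Fin k → ℂ) (G : ℂ → ℂ), AnalyticAt ℂ G 0 ∧
      ∀ z, F z i = (∑ j : Fin k, c j * z ^ (j : ℕ)) + z ^ k * G z :=
    fun i => exists_taylor k (hF i)
  choose c G hG hQ using H
  refine ⟨fun j i => c i j, fun z i => G i z, hG, fun z => ?_⟩
  funext i
  rw [hQ i z]
  simp only [Pi.add_apply, Pi.smul_apply, smul_eq_mul, rho_apply]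

lemma rho_uniq {n : ℕ} (k : ℕ) {a b : Fin k → Fin n → ℂ} {G₁ G₂ : ℂ → Fin n → ℂ}
    (hG₁ : ∀ i, AnalyticAt ℂ (fun z => G₁ z i) 0)
    (hG₂ : ∀ i, AnalyticAt ℂ (fun z => G₂ z i) 0)
    (h : ∀ᶠ z in 𝓝 (0:ℂ), rho a z + z ^ k • G₁ z = rho b z + z ^ k • G₂ z) :
    a = b := by
  funext j i
  have key : ∀ᶠ z in 𝓝 (0:ℂ),
      (∑ j' : Fin k, (a j' i - b j' i) * z ^ (j' : ℕ)) = z ^ k * (G₂ z i - G₁ z i) := by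
    filter_upwards [h] with z hz
    have hzi := congrFun hz i
    simp only [Pi.add_apply, Pi.smul_apply, smul_eq_mul, rho_apply] at hzi
    rw [show (∑ j' : Fin k, (a j' i - b j' i) * z ^ (j' : ℕ))
        = (∑ j' : Fin k, a j' i * z ^ (j' : ℕ)) - (∑ j' : Fin k, b j' i * z ^ (j' : ℕ)) by
      rw [← Finset.sum_sub_distrib]; exact Finset.sum_congr rfl fun _ _ => by ring]
    linear_combination hzi
  have := coeff_eq_zero k k (fun j' => a j' i - b j' i) _ ((hG₂ i).sub (hG₁ i)) key j j.isLt
  simpa [sub_eq_zero] using this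

variable {n : ℕ} (B : (Fin n → ℂ) →ₗ[ℂ] (Fin n → ℂ) →ₗ[ℂ] ℂ)

lemma B_expand (v w : Fin n → ℂ) :
    B v w = ∑ i : Fin n, ∑ j : Fin n,
      v i * w j * B (fun l => if i = l then 1 else 0) (fun l => if j = l then 1 else 0) := by
  conv_lhs => rw [pi_eq_sum_univ v, pi_eq_sum_univ w]
  simp only [map_sum, LinearMap.sum_apply, _root_.map_smul, LinearMap.smul_apply, smul_eq_mul]
  rw [Finset.sum_comm]
  exact Finset.sum_congr rfl fun i _ => by
    rw [Finset.mul_sum]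
    exact Finset.sum_congr rfl fun j _ => by ring

lemma analyticAt_B {x y : ℂ → Fin n → ℂ}
    (hx : ∀ i, AnalyticAt ℂ (fun z => x z i) 0) (hy : ∀ i, AnalyticAt ℂ (fun z => y z i) 0) :
    AnalyticAt ℂ (fun z => B (x z) (y z)) 0 := by
  have : (fun z => B (x z) (y z)) = fun z => ∑ i : Fin n, ∑ j : Fin n,
      x z i * y z j * B (fun l => if i = l then 1 else 0) (fun l => if j = l then 1 else 0) := by
    funext z; exact B_expand B (x z) (y z)
  rw [this]
  exact Finset.analyticAt_fun_sum _ fun i _ => Finset.analyticAt_fun_sum _ fun j _ =>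
    ((hx i).fun_mul (hy j)).fun_mul analyticAt_const

section
variable {n k : ℕ} (B : (Fin n → ℂ) →ₗ[ℂ] (Fin n → ℂ) →ₗ[ℂ] ℂ)

noncomputable def pairP (a b : Fin k → Fin n → ℂ) : Polynomial ℂ :=
  ∑ i : Fin k, ∑ j : Fin k, Polynomial.monomial ((i:ℕ)+(j:ℕ)) (B (a i) (b j))

noncomputable def pairC (a b : Fin k → Fin n → ℂ) : ℂ := (pairP B a b).coeff (k-1)

lemma pairP_eval (a b : Fin k → Fin n → ℂ) (z : ℂ) :
    (pairP B a b).eval z = B (rho a z) (rho b z) := by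
  have hr : B (rho a z) (rho b z)
      = ∑ i : Fin k, ∑ j : Fin k, z ^ (i:ℕ) * z ^ (j:ℕ) * B (a i) (b j) := by
    simp only [rho, map_sum, LinearMap.sum_apply, _root_.map_smul, LinearMap.smul_apply,
      smul_eq_mul]
    rw [Finset.sum_comm]
    exact Finset.sum_congr rfl fun i _ => by
      rw [Finset.mul_sum]
      exact Finset.sum_congr rfl fun j _ => by ring
  rw [hr]
  simp only [pairP, Polynomial.eval_finset_sum, Polynomial.eval_monomial, pow_add]
  exact Finset.sum_congr rfl fun i _ => Finset.sum_congr rfl fun j _ => by ring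

lemma pairP_coeff (a b : Fin k → Fin n → ℂ) (m : ℕ) :
    (pairP B a b).coeff m
      = ∑ i : Fin k, ∑ j : Fin k, if (i:ℕ)+(j:ℕ) = m then B (a i) (b j) else 0 := by
  simp [pairP, Polynomial.finset_sum_coeff, Polynomial.coeff_monomial]


lemma poly_U (D : Polynomial ℂ) (K : ℕ) (R : ℂ → ℂ) (hR : AnalyticAt ℂ R 0)
    (h : ∀ᶠ z in 𝓝 (0:ℂ), D.eval z = z ^ K * R z) :
    ∀ j, j < K → D.coeff j = 0 := by
  intro j hj
  set m := D.natDegree + 1 with hm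
  have he : ∀ z : ℂ, D.eval z = ∑ i : Fin m, D.coeff i * z ^ (i:ℕ) := by
    intro z
    rw [Polynomial.eval_eq_sum_range, ← Fin.sum_univ_eq_sum_range]
  have key := coeff_eq_zero K m (fun i : Fin m => D.coeff i) R hR
    (h.mono fun z hz => by rw [← he]; exact hz)
  by_cases hjm : j < m
  · exact key ⟨j, hjm⟩ hj
  · exact Polynomial.coeff_eq_zero_of_natDegree_lt (by omega)

lemma pairC_eq (hk : 1 ≤ k) (a b a' b' : Fin k → Fin n → ℂ) (R : ℂ → ℂ)
    (hR : AnalyticAt ℂ R 0)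
    (h : ∀ᶠ z in 𝓝 (0:ℂ), B (rho a z) (rho b z) = B (rho a' z) (rho b' z) + z ^ k * R z) :
    pairC B a b = pairC B a' b' := by
  have h' : ∀ᶠ z in 𝓝 (0:ℂ), (pairP B a b - pairP B a' b').eval z = z ^ k * R z := by
    filter_upwards [h] with z hz
    rw [Polynomial.eval_sub, pairP_eval, pairP_eval, hz]
    ring
  have := poly_U _ k R hR h' (k-1) (by omega)
  rw [Polynomial.coeff_sub] at this
  unfold pairC
  linear_combination this

lemma pairC_single_left (hk : 1 ≤ k) (d : Fin k) (x : Fin n → ℂ) (b : Fin k → Fin n → ℂ) :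
    pairC B (fun i => if i = d then x else 0) b = B x (b (Fin.rev d)) := by
  unfold pairC
  rw [pairP_coeff]
  rw [Finset.sum_eq_single d]
  · have hcond : ∀ j : Fin k, ((d:ℕ)+(j:ℕ) = k-1) ↔ (j = Fin.rev d) := by
      intro j
      rw [Fin.ext_iff, Fin.val_rev]
      omega
    calc (∑ j : Fin k, if (d:ℕ)+(j:ℕ) = k-1 then B (if d = d then x else 0) (b j) else 0)
        = ∑ j : Fin k, if j = Fin.rev d then B x (b j) else 0 :=
          Finset.sum_congr rfl fun j _ => by rw [if_pos rfl, if_congr (hcond j) rfl rfl]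
      _ = B x (b (Fin.rev d)) := by rw [Finset.sum_ite_eq' Finset.univ (Fin.rev d)]; simp
  · intro i _ hi
    simp [if_neg hi]
  · intro hd; exact absurd (Finset.mem_univ d) hd

lemma pairC_add_left (a a' b : Fin k → Fin n → ℂ) :
    pairC B (a + a') b = pairC B a b + pairC B a' b := by
  unfold pairC
  rw [← Polynomial.coeff_add]
  congr 1
  unfold pairP
  rw [← Finset.sum_add_distrib]
  refine Finset.sum_congr rfl fun i _ => ?_
  rw [← Finset.sum_add_distrib]
  refine Finset.sum_congr rfl fun j _ => ?_
  rw [← map_add]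
  congr 1
  rw [Pi.add_apply, map_add, LinearMap.add_apply]

lemma pairC_smul_left (t : ℂ) (a b : Fin k → Fin n → ℂ) :
    pairC B (t • a) b = t * pairC B a b := by
  unfold pairC
  rw [pairP_coeff, pairP_coeff, Finset.mul_sum]
  refine Finset.sum_congr rfl fun i _ => ?_
  rw [Finset.mul_sum]
  refine Finset.sum_congr rfl fun j _ => ?_
  rw [Pi.smul_apply, _root_.map_smul, LinearMap.smul_apply, smul_eq_mul]
  split <;> simp

lemma pairC_add_right (a b b' : Fin k → Fin n → ℂ) :
    pairC B a (b + b') = pairC B a b + pairC B a b' := by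
  unfold pairC
  rw [pairP_coeff, pairP_coeff, pairP_coeff, ← Finset.sum_add_distrib]
  refine Finset.sum_congr rfl fun i _ => ?_
  rw [← Finset.sum_add_distrib]
  refine Finset.sum_congr rfl fun j _ => ?_
  rw [Pi.add_apply, map_add]
  split <;> simp

lemma pairC_smul_right (t : ℂ) (a b : Fin k → Fin n → ℂ) :
    pairC B a (t • b) = t * pairC B a b := by
  unfold pairC
  rw [pairP_coeff, pairP_coeff, Finset.mul_sum]
  refine Finset.sum_congr rfl fun i _ => ?_
  rw [Finset.mul_sum]
  refine Finset.sum_congr rfl fun j _ => ?_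
  rw [Pi.smul_apply, _root_.map_smul, smul_eq_mul]
  split <;> simp

end

lemma rho_zero {n k : ℕ} (z : ℂ) : rho (0 : Fin k → Fin n → ℂ) z = 0 := by
  simp [rho]

lemma rho_single {n k : ℕ} (d : Fin k) (x : Fin n → ℂ) (z : ℂ) :
    rho (fun i => if i = d then x else 0) z = z ^ (d:ℕ) • x := by
  unfold rho
  rw [Finset.sum_eq_single d]
  · simp
  · intro i _ hi; simp [if_neg hi]
  · intro hd; exact absurd (Finset.mem_univ d) hd

set_option maxHeartbeats 2000000 in
lemma keyL {n : ℕ} (S : ℂ → Matrix (Fin n) (Fin n) ℂ)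
    (hS : ∀ i j, AnalyticAt ℂ (fun z => S z i j) 0)
    (B : (Fin n → ℂ) →ₗ[ℂ] (Fin n → ℂ) →ₗ[ℂ] ℂ)
    (hsymm : ∀ v w, B v w = B w v)
    (hnondeg : ∀ v, (∀ w, B v w = 0) → v = 0)
    (hcompat : ∀ᶠ z in 𝓝 (0 : ℂ), ∀ v w, B (S z *ᵥ v) w = B v (S z *ᵥ w))
    (k : ℕ) (hk : 1 ≤ k) (x : Fin n → ℂ)
    (hx : ∀ w ∈ VkSet S k, B x w = 0) :
    ∃ u G : ℂ → Fin n → ℂ, (∀ i, AnalyticAt ℂ (fun z => u z i) 0) ∧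
      (∀ i, AnalyticAt ℂ (fun z => G z i) 0) ∧ G 0 = x ∧
      ∀ᶠ z in 𝓝 (0:ℂ), S z *ᵥ u z = z ^ (k-1) • G z := by
  classical
  obtain ⟨m, rfl⟩ : ∃ m, k = m + 1 := ⟨k - 1, (Nat.succ_pred_eq_of_pos hk).symm⟩
  set k : ℕ := m + 1 with hkdef
  have H : ∀ a : Fin k → Fin n → ℂ, ∃ (b : Fin k → Fin n → ℂ) (G : ℂ → Fin n → ℂ),
      (∀ i, AnalyticAt ℂ (fun z => G z i) 0) ∧
      ∀ z, S z *ᵥ rho a z = rho b z + z ^ k • G z :=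
    fun a => exists_taylor_vec k (fun i => analyticAt_mulVec hS (analyticAt_rho a) i)
  choose Sb0 Gb hGb hSb using H
  have uniq : ∀ (b b' : Fin k → Fin n → ℂ) (G G' : ℂ → Fin n → ℂ),
      (∀ i, AnalyticAt ℂ (fun z => G z i) 0) → (∀ i, AnalyticAt ℂ (fun z => G' z i) 0) →
      (∀ z : ℂ, rho b z + z ^ k • G z = rho b' z + z ^ k • G' z) → b = b' :=
    fun b b' G G' hG hG' h => rho_uniq k hG hG' (Eventually.of_forall h)
  have hadd : ∀ a a', Sb0 (a + a') = Sb0 a + Sb0 a' := by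
    intro a a'
    refine uniq _ _ (Gb (a+a')) (fun z => Gb a z + Gb a' z) (hGb _)
      (fun i => ((hGb a i).add (hGb a' i))) fun z => ?_
    calc rho (Sb0 (a+a')) z + z ^ k • Gb (a+a') z
        = S z *ᵥ rho (a+a') z := (hSb (a+a') z).symm
      _ = S z *ᵥ rho a z + S z *ᵥ rho a' z := by rw [rho_add, Matrix.mulVec_add]
      _ = (rho (Sb0 a) z + z ^ k • Gb a z) + (rho (Sb0 a') z + z ^ k • Gb a' z) := by
          rw [hSb a z, hSb a' z]
      _ = rho (Sb0 a + Sb0 a') z + z ^ k • (fun z => Gb a z + Gb a' z) z := by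
          rw [rho_add]; simp only [smul_add]; abel
  have hsmul : ∀ (t : ℂ) a, Sb0 (t • a) = t • Sb0 a := by
    intro t a
    refine uniq _ _ (Gb (t • a)) (fun z => t • Gb a z) (hGb _)
      (fun i => by simpa only [Pi.smul_apply, smul_eq_mul] using analyticAt_const.fun_mul (hGb a i)) fun z => ?_
    calc rho (Sb0 (t • a)) z + z ^ k • Gb (t • a) z
        = S z *ᵥ rho (t • a) z := (hSb (t • a) z).symm
      _ = t • (S z *ᵥ rho a z) := by rw [rho_smul, Matrix.mulVec_smul]
      _ = t • (rho (Sb0 a) z + z ^ k • Gb a z) := by rw [hSb a z]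
      _ = rho (t • Sb0 a) z + z ^ k • (fun z => t • Gb a z) z := by
          rw [rho_smul]; simp only [smul_add]; rw [smul_comm]
  let M := Fin k → Fin n → ℂ
  let Sb : M →ₗ[ℂ] M := { toFun := Sb0, map_add' := hadd, map_smul' := hsmul }
  let Kk := LinearMap.ker Sb
  let Ik := LinearMap.range Sb
  have claimA : ∀ a b : M, pairC B (Sb0 a) b = pairC B a (Sb0 b) := by
    intro a b
    refine pairC_eq B (by omega) _ _ _ _
      (fun z => B (rho a z) (Gb b z) - B (Gb a z) (rho b z))
      ((analyticAt_B B (analyticAt_rho a) (hGb b)).sub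
        (analyticAt_B B (hGb a) (analyticAt_rho b))) ?_
    filter_upwards [hcompat] with z hc
    calc B (rho (Sb0 a) z) (rho b z)
        = B (S z *ᵥ rho a z) (rho b z) - z ^ k * B (Gb a z) (rho b z) := by
          rw [hSb a z, map_add, LinearMap.add_apply, _root_.map_smul, LinearMap.smul_apply,
            smul_eq_mul]; ring
      _ = B (rho a z) (S z *ᵥ rho b z) - z ^ k * B (Gb a z) (rho b z) := by rw [hc]
      _ = B (rho a z) (rho (Sb0 b) z)
          + z ^ k * (B (rho a z) (Gb b z) - B (Gb a z) (rho b z)) := by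
          rw [hSb b z, map_add, _root_.map_smul, smul_eq_mul]; ring
  -- members of the kernel give elements of VkSet
  have memVk : ∀ a : M, a ∈ Kk → a 0 ∈ VkSet S k := by
    intro a ha
    have ha0 : Sb0 a = 0 := ha
    refine ⟨rho a, Gb a, analyticAt_rho a, hGb a, rho_zero_eval a, ?_⟩
    refine Eventually.of_forall fun z => ?_
    rw [hSb a z, ha0, rho_zero, zero_add]
  -- the bilinear pairing
  let φ : M →ₗ[ℂ] M →ₗ[ℂ] ℂ := LinearMap.mk₂ ℂ (pairC B) (pairC_add_left B)
    (pairC_smul_left B) (pairC_add_right B) (pairC_smul_right B)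
  have hIle : ∀ f : M, f ∈ Kk → Ik ≤ LinearMap.ker (φ.flip f) := by
    rintro f hf _ ⟨u, rfl⟩
    have : pairC B (Sb0 u) f = 0 := by
      rw [claimA u f, show Sb0 f = 0 from hf]
      simpa using pairC_smul_right B 0 u 0
    exact this
  let Φ : Kk →ₗ[ℂ] Module.Dual ℂ (M ⧸ Ik) :=
    { toFun := fun f => Ik.liftQ (φ.flip (f : M)) (hIle f f.2),
      map_add' := by
        intro f g
        refine Submodule.linearMap_qext Ik (LinearMap.ext fun a => ?_)
        simp only [LinearMap.comp_apply, Submodule.mkQ_apply, Submodule.liftQ_apply,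
          LinearMap.add_apply, Submodule.coe_add, map_add]
      map_smul' := by
        intro t f
        refine Submodule.linearMap_qext Ik (LinearMap.ext fun a => ?_)
        simp only [LinearMap.comp_apply, Submodule.mkQ_apply, Submodule.liftQ_apply,
          RingHom.id_apply, LinearMap.smul_apply, SetLike.val_smul, _root_.map_smul] }
  have Φinj : Function.Injective Φ := by
    rw [injective_iff_map_eq_zero]
    intro f hf
    have hall : ∀ a : M, pairC B a (f : M) = 0 := by
      intro a
      have := congrArg (fun ξ => ξ (Ik.mkQ a)) hf
      simpa only [Φ, LinearMap.coe_mk, AddHom.coe_mk, Submodule.mkQ_apply, Submodule.liftQ_apply,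
        LinearMap.flip_apply, LinearMap.mk₂_apply, φ, LinearMap.zero_apply] using this
    have hzero : ∀ d : Fin k, (f : M) (Fin.rev d) = 0 := by
      intro d
      refine hnondeg _ fun c => ?_
      rw [← hsymm]
      have := hall (fun i => if i = d then c else 0)
      rwa [pairC_single_left B (by omega)] at this
    have : (f : M) = 0 := by
      funext j
      have := hzero (Fin.rev j)
      rwa [Fin.rev_rev] at this
    exact Subtype.ext this
  have hdim : Module.finrank ℂ Kk = Module.finrank ℂ (Module.Dual ℂ (M ⧸ Ik)) := by
    rw [Subspace.dual_finrank_eq]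
    have h1 : Module.finrank ℂ Ik + Module.finrank ℂ Kk = Module.finrank ℂ M :=
      LinearMap.finrank_range_add_finrank_ker Sb
    have h2 : Module.finrank ℂ (M ⧸ Ik) + Module.finrank ℂ Ik = Module.finrank ℂ M :=
      Submodule.finrank_quotient_add_finrank Ik
    omega
  have Φsurj : Function.Surjective Φ :=
    (LinearMap.injective_iff_surjective_of_finrank_eq_finrank hdim).mp Φinj
  -- the distinguished element
  let gx : M := fun i => if i = Fin.last m then x else 0
  have hgx : gx ∈ Ik := by
    rw [← Submodule.Quotient.mk_eq_zero]
    rw [← Module.forall_dual_apply_eq_zero_iff ℂ]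
    intro ξ
    obtain ⟨f, rfl⟩ := Φsurj ξ
    have : Φ f (Ik.mkQ gx) = pairC B gx (f : M) := rfl
    rw [show Submodule.Quotient.mk gx = Ik.mkQ gx from rfl, this]
    have hrev : Fin.rev (Fin.last m) = 0 := Fin.rev_last m
    rw [pairC_single_left B (by omega), hrev]
    exact hx _ (memVk (f : M) f.2)
  obtain ⟨u, hu⟩ := hgx
  refine ⟨rho u, fun z => x + z • Gb u z, analyticAt_rho u,
    (fun i => analyticAt_const.add (analyticAt_id.mul (hGb u i))), by simp, ?_⟩
  refine Eventually.of_forall fun z => ?_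
  have e : S z *ᵥ rho u z = z ^ m • x + z ^ (m+1) • Gb u z := by
    rw [hSb u z, show Sb0 u = gx from hu, rho_single, Fin.val_last]
  rw [e, show k - 1 = m from rfl, smul_add, smul_smul, ← pow_succ]


/-- Let `S` be as before and let `B` be a nondegenerate symmetric bilinear form on `ℂⁿ`
with `B (S z v) w = B v (S z w)` near `0`.  Then for `v ∈ V_k^S` one has `v ∈ V_{k+1}^S`
iff for every `w ∈ V_k^S` and all analytic `f, g` with `f 0 = v`, `g 0 = w` whose images
under `S` vanish to order `≥ k`, the limit `lim_{z→0} z^{−k}·B (S z f z) (g z)` is `0`;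
i.e. the induced form `⟨·,·⟩_k` on `V_k^S` is well defined with radical exactly
`V_{k+1}^S`, hence nondegenerate on `V_k^S/V_{k+1}^S`. -/
theorem stmt10 (n : ℕ) (hn : 1 ≤ n) (S : ℂ → Matrix (Fin n) (Fin n) ℂ)
    (hS : ∀ i j, AnalyticAt ℂ (fun z => S z i j) 0)
    (hinv : ∃ ε > (0 : ℝ), ∀ z : ℂ, z ≠ 0 → ‖z‖ < ε → IsUnit (S z))
    (B : (Fin n → ℂ) →ₗ[ℂ] (Fin n → ℂ) →ₗ[ℂ] ℂ)
    (hsymm : ∀ v w, B v w = B w v)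
    (hnondeg : ∀ v, (∀ w, B v w = 0) → v = 0)
    (hcompat : ∀ᶠ z in 𝓝 (0 : ℂ), ∀ v w, B (S z *ᵥ v) w = B v (S z *ᵥ w)) :
    ∀ k : ℕ, ∀ v ∈ VkSet S k,
      (v ∈ VkSet S (k + 1) ↔
        ∀ w ∈ VkSet S k, ∀ f g : ℂ → Fin n → ℂ,
          (∀ i, AnalyticAt ℂ (fun z => f z i) 0) → f 0 = v →
          (∃ h : ℂ → Fin n → ℂ, (∀ i, AnalyticAt ℂ (fun z => h z i) 0) ∧
            ∀ᶠ z in 𝓝 (0 : ℂ), S z *ᵥ f z = z ^ k • h z) →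
          (∀ i, AnalyticAt ℂ (fun z => g z i) 0) → g 0 = w →
          (∃ h : ℂ → Fin n → ℂ, (∀ i, AnalyticAt ℂ (fun z => h z i) 0) ∧
            ∀ᶠ z in 𝓝 (0 : ℂ), S z *ᵥ g z = z ^ k • h z) →
          Filter.Tendsto (fun z : ℂ => (z ^ k)⁻¹ * B (S z *ᵥ f z) (g z))
            (𝓝[≠] (0 : ℂ)) (𝓝 0)) := by
  have hne : NeBot (𝓝[≠] (0:ℂ)) := Module.punctured_nhds_neBot ℂ ℂ 0
  intro k v hv
  constructor
  · -- forward direction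
    rintro ⟨f₀, h₀, hf₀a, hh₀a, hf₀0, hf₀e⟩ w hw f g hfa hf0 ⟨hF, hFa, hFe⟩ hga hg0 ⟨hG, hGa, hGe⟩
    have t1 : Tendsto (fun z => B (f z) (hG z)) (𝓝[≠] (0:ℂ)) (𝓝 (B (f 0) (hG 0))) :=
      (analyticAt_B B hfa hGa).continuousAt.tendsto.mono_left nhdsWithin_le_nhds
    have e1 : (fun z : ℂ => (z ^ k)⁻¹ * B (S z *ᵥ f z) (g z))
        =ᶠ[𝓝[≠] (0:ℂ)] fun z => B (f z) (hG z) := by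
      filter_upwards [hcompat.filter_mono nhdsWithin_le_nhds,
        hGe.filter_mono nhdsWithin_le_nhds, self_mem_nhdsWithin] with z hc hz hz0
      rw [hc, hz, _root_.map_smul, smul_eq_mul, inv_mul_cancel_left₀ (pow_ne_zero k hz0)]
    have t2 : Tendsto (fun z => B (f₀ z) (hG z)) (𝓝[≠] (0:ℂ)) (𝓝 (B (f₀ 0) (hG 0))) :=
      (analyticAt_B B hf₀a hGa).continuousAt.tendsto.mono_left nhdsWithin_le_nhds
    have e2 : (fun z => B (f₀ z) (hG z)) =ᶠ[𝓝[≠] (0:ℂ)] fun z => z * B (h₀ z) (g z) := by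
      filter_upwards [hcompat.filter_mono nhdsWithin_le_nhds,
        hGe.filter_mono nhdsWithin_le_nhds, hf₀e.filter_mono nhdsWithin_le_nhds,
        self_mem_nhdsWithin] with z hc hz hz0 hzz
      have : z ^ k * B (f₀ z) (hG z) = z ^ k * (z * B (h₀ z) (g z)) := by
        rw [show z ^ k * B (f₀ z) (hG z) = B (f₀ z) (z ^ k • hG z) by
            rw [_root_.map_smul, smul_eq_mul],
          ← hz, ← hc, hz0, _root_.map_smul, LinearMap.smul_apply, smul_eq_mul, pow_succ]
        ring
      exact mul_left_cancel₀ (pow_ne_zero k hzz) this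
    have t3 : Tendsto (fun z : ℂ => z * B (h₀ z) (g z)) (𝓝[≠] (0:ℂ)) (𝓝 0) := by
      have h4 := (analyticAt_id.mul (analyticAt_B B hh₀a hga)).continuousAt.tendsto
      have h5 : Tendsto (fun z : ℂ => z * B (h₀ z) (g z)) (𝓝 (0:ℂ))
          (𝓝 ((0:ℂ) * B (h₀ 0) (g 0))) := h4
      simp only [zero_mul] at h5
      exact h5.mono_left nhdsWithin_le_nhds
    have key : B (f₀ 0) (hG 0) = 0 := tendsto_nhds_unique t2 (Tendsto.congr' e2.symm t3)
    have key2 : B (f 0) (hG 0) = 0 := by rw [hf0, ← hf₀0]; exact key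
    rw [key2] at t1
    exact Tendsto.congr' e1.symm t1
  · -- reverse direction
    intro hcond
    obtain ⟨f, h, hfa, hha, hf0, hfe⟩ := hv
    have claimX : ∀ w ∈ VkSet S k, B (h 0) w = 0 := by
      intro w hw
      obtain ⟨g, hG, hga, hGa, hg0, hge⟩ := hw
      have lim0 := hcond w ⟨g, hG, hga, hGa, hg0, hge⟩ f g hfa hf0 ⟨h, hha, hfe⟩ hga hg0
        ⟨hG, hGa, hge⟩
      have e : (fun z : ℂ => (z ^ k)⁻¹ * B (S z *ᵥ f z) (g z))
          =ᶠ[𝓝[≠] (0:ℂ)] fun z => B (h z) (g z) := by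
        filter_upwards [hfe.filter_mono nhdsWithin_le_nhds, self_mem_nhdsWithin] with z hz hz0
        rw [hz, _root_.map_smul, LinearMap.smul_apply, smul_eq_mul,
          inv_mul_cancel_left₀ (pow_ne_zero k hz0)]
      have t : Tendsto (fun z => B (h z) (g z)) (𝓝[≠] (0:ℂ)) (𝓝 (B (h 0) (g 0))) :=
        (analyticAt_B B hha hga).continuousAt.tendsto.mono_left nhdsWithin_le_nhds
      have := tendsto_nhds_unique t (Tendsto.congr' e lim0)
      rwa [hg0] at this
    rcases Nat.eq_zero_or_pos k with hk0 | hkpos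
    · subst hk0
      have hall : ∀ w, B (h 0) w = 0 := by
        intro w
        refine claimX w ⟨fun _ => w, fun z => S z *ᵥ w, fun i => analyticAt_const,
          fun i => analyticAt_mulVec hS (x := fun _ => w) (fun j => analyticAt_const) i, rfl,
          Eventually.of_forall fun z => by simp⟩
      have h00 : h 0 = 0 := hnondeg _ hall
      have hdiv : ∀ i, ∃ G, AnalyticAt ℂ G 0 ∧ ∀ z, h z i = z * G z :=
        fun i => exists_div (hha i) (by rw [show h 0 i = 0 from congrFun h00 i])
      choose h1 hh1a hh1 using hdiv
      refine ⟨f, fun z i => h1 i z, hfa, hh1a, hf0, ?_⟩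
      filter_upwards [hfe] with z hz
      rw [hz]
      funext i
      simp only [Pi.smul_apply, smul_eq_mul, pow_zero, one_mul, zero_add, pow_one]
      exact hh1 i z
    · obtain ⟨u, G, hua, hGa, hG0, hue⟩ :=
        keyL S hS B hsymm hnondeg hcompat k hkpos (h 0) claimX
      have hDdiv : ∀ i, ∃ D1, AnalyticAt ℂ D1 0 ∧ ∀ z, h z i - G z i = z * D1 z :=
        fun i => exists_div (F := fun z => h z i - G z i) ((hha i).sub (hGa i))
          (by show h 0 i - G 0 i = 0; rw [congrFun hG0 i]; ring)
      choose D1 hD1a hD1 using hDdiv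
      refine ⟨fun z => f z - z • u z, fun z i => D1 i z,
        fun i => by
          simpa using (hfa i).fun_sub (analyticAt_id.fun_mul (hua i)),
        hD1a, by simp [hf0], ?_⟩
      filter_upwards [hfe, hue] with z hzf hzu
      rw [Matrix.mulVec_sub, hzf, Matrix.mulVec_smul, hzu]
      funext i
      have hzk : z * z ^ (k - 1) = z ^ k := by
        rw [← pow_succ']
        congr 1
        omega
      simp only [Pi.sub_apply, Pi.smul_apply, smul_eq_mul]
      linear_combination z ^ k * hD1 i z - G z i * hzk
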